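/- Let G = ∇f̄(X) ∈ ℝ^{n×k}. The vector grad = ρ·XJ·skew(JXᵀG) + A⁻¹X⊥Γ₃X⊥ᵀA⁻¹G lies in the tangent space at X (gradᵀAX + XᵀA·grad = 0) and satisfies g_{ρ,X⊥}(grad, Z) = tr(GᵀZ) for every tangent vector Z at X. -/

import Mathlib

open Matrix Module

private lemma aux_isUnit {n k : ℕ} {A : Matrix (Fin n) (Fin n) ℝ}
    (hA : Aᵀ = A) (hAinv : IsUnit A.det) {J : Matrix (Fin k) (Fin k) ℝ} (hJ2 : J * J = 1)
    {X : Matrix (Fin n) (Fin k) ℝ} (hX : Xᵀ * A * X = J)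
    {Xp : Matrix (Fin n) (Fin (n - k)) ℝ} (hXp : Xp.rank = n - k)
    (hperp : Xᵀ * Xp = 0) {ρ : ℝ} (hρ : 0 < ρ)
    {Γ₃ : Matrix (Fin (n - k)) (Fin (n - k)) ℝ} (hΓ₃ : Γ₃.PosDef) :
    IsUnit (ρ • (X * Xᵀ) + A⁻¹ * Xp * Γ₃ * Xpᵀ * A⁻¹) := by
  have hAi : (A⁻¹)ᵀ = A⁻¹ := by rw [Matrix.transpose_nonsing_inv, hA]
  have hJu : IsUnit J := ⟨⟨J, J, hJ2, hJ2⟩, rfl⟩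
  have hrX : X.rank = k := le_antisymm X.rank_le_width (by
    calc k = J.rank := by rw [J.rank_of_isUnit hJu, Fintype.card_fin]
    _ = (Xᵀ * A * X).rank := by rw [hX]
    _ ≤ X.rank := le_trans (Matrix.rank_mul_le_right _ _) le_rfl)
  have hkn : k ≤ n := hrX ▸ X.rank_le_height
  have hpx : Xpᵀ * X = 0 := by
    have := congrArg Matrix.transpose hperp
    simpa [Matrix.transpose_mul] using this
  -- ker Xpᵀ = range X
  have hsub2 : LinearMap.range X.mulVecLin ≤ LinearMap.ker (Xpᵀ).mulVecLin := by
    rintro _ ⟨a, rfl⟩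
    simp only [LinearMap.mem_ker, Matrix.mulVecLin_apply, Matrix.mulVec_mulVec, hpx,
      Matrix.zero_mulVec]
  have hrn1 : finrank ℝ (LinearMap.range X.mulVecLin) = k := hrX
  have hrn2 : finrank ℝ (LinearMap.ker (Xpᵀ).mulVecLin) = k := by
    have h := LinearMap.finrank_range_add_finrank_ker (Xpᵀ).mulVecLin
    have hr : finrank ℝ (LinearMap.range (Xpᵀ).mulVecLin) = n - k := by
      have : (Xpᵀ).rank = n - k := by rw [Matrix.rank_transpose, hXp]
      exact this
    rw [hr] at h
    have hfn : finrank ℝ (Fin n → ℝ) = n := by simp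
    rw [hfn] at h
    omega
  have heq2 : LinearMap.range X.mulVecLin = LinearMap.ker (Xpᵀ).mulVecLin :=
    Submodule.eq_of_le_of_finrank_le hsub2 (by rw [hrn1, hrn2])
  -- injectivity
  rw [← Matrix.mulVec_injective_iff_isUnit]
  rw [show (ρ • (X * Xᵀ) + A⁻¹ * Xp * Γ₃ * Xpᵀ * A⁻¹).mulVec
      = ⇑(ρ • (X * Xᵀ) + A⁻¹ * Xp * Γ₃ * Xpᵀ * A⁻¹).mulVecLin from rfl]
  rw [← LinearMap.ker_eq_bot, LinearMap.ker_eq_bot']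
  intro v hv
  rw [Matrix.mulVecLin_apply] at hv
  set u : Fin k → ℝ := Xᵀ *ᵥ v with hu
  set y : Fin (n-k) → ℝ := Xpᵀ *ᵥ (A⁻¹ *ᵥ v) with hy
  have hq : v ⬝ᵥ ((ρ • (X * Xᵀ) + A⁻¹ * Xp * Γ₃ * Xpᵀ * A⁻¹) *ᵥ v) = 0 := by
    rw [hv, dotProduct_zero]
  have hterm1 : v ⬝ᵥ ((ρ • (X * Xᵀ)) *ᵥ v) = ρ * (u ⬝ᵥ u) := by
    rw [Matrix.smul_mulVec, dotProduct_smul, ← Matrix.mulVec_mulVec,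
      Matrix.dotProduct_mulVec, ← Matrix.mulVec_transpose]
    rfl
  have hterm2 : v ⬝ᵥ ((A⁻¹ * Xp * Γ₃ * Xpᵀ * A⁻¹) *ᵥ v) = y ⬝ᵥ (Γ₃ *ᵥ y) := by
    have hBt : (Xpᵀ * A⁻¹)ᵀ = A⁻¹ * Xp := by
      rw [Matrix.transpose_mul, hAi, Matrix.transpose_transpose]
    have : A⁻¹ * Xp * Γ₃ * Xpᵀ * A⁻¹ = (Xpᵀ * A⁻¹)ᵀ * Γ₃ * (Xpᵀ * A⁻¹) := by
      rw [hBt, Matrix.mul_assoc]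
    rw [this, ← Matrix.mulVec_mulVec, ← Matrix.mulVec_mulVec, Matrix.dotProduct_mulVec,
      ← Matrix.mulVec_transpose, Matrix.transpose_transpose]
    simp [hy, Matrix.mulVec_mulVec]
  rw [Matrix.add_mulVec, dotProduct_add, hterm1, hterm2] at hq
  have hnn1 : 0 ≤ u ⬝ᵥ u := Finset.sum_nonneg fun i _ => mul_self_nonneg _
  have hnn2 : 0 ≤ y ⬝ᵥ (Γ₃ *ᵥ y) := by
    have := hΓ₃.posSemidef.dotProduct_mulVec_nonneg y
    simpa using this
  have hu0 : u ⬝ᵥ u = 0 := by nlinarith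
  have hy0 : y = 0 := by
    by_contra hne
    have := hΓ₃.dotProduct_mulVec_pos hne
    simp only [star_trivial] at this
    nlinarith
  have huz : u = 0 := dotProduct_self_eq_zero.mp hu0
  -- A⁻¹ v ∈ ker Xpᵀ = range X
  have hmem : A⁻¹ *ᵥ v ∈ LinearMap.ker (Xpᵀ).mulVecLin := by
    simp only [LinearMap.mem_ker, Matrix.mulVecLin_apply]
    exact hy0
  rw [← heq2] at hmem
  obtain ⟨a, ha⟩ := hmem
  rw [Matrix.mulVecLin_apply] at ha
  have hvA : v = A *ᵥ (X *ᵥ a) := by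
    rw [ha, Matrix.mulVec_mulVec, Matrix.mul_nonsing_inv A hAinv, Matrix.one_mulVec]
  have hJa : J *ᵥ a = 0 := by
    have h1 : Xᵀ *ᵥ v = (Xᵀ * A * X) *ᵥ a := by
      rw [hvA, Matrix.mulVec_mulVec, Matrix.mulVec_mulVec]
    rw [← hX, ← h1]
    exact huz
  have ha0 : a = 0 := by
    have : (J * J) *ᵥ a = J *ᵥ (J *ᵥ a) := (Matrix.mulVec_mulVec _ _ _).symm
    rw [hJ2, Matrix.one_mulVec, hJa, Matrix.mulVec_zero] at this
    exact this
  rw [hvA, ha0]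
  simp

private lemma trace_symm_skew {k : ℕ} (S K : Matrix (Fin k) (Fin k) ℝ)
    (hS : Sᵀ = S) (hK : Kᵀ = -K) : Matrix.trace (S * K) = 0 := by
  have h : Matrix.trace (S * K) = Matrix.trace ((S * K)ᵀ) := (Matrix.trace_transpose _).symm
  rw [Matrix.transpose_mul, hS, hK, Matrix.neg_mul, Matrix.trace_neg, Matrix.trace_mul_comm] at h
  have h2 : Matrix.trace (S * K) = Matrix.trace (K * S) := Matrix.trace_mul_comm _ _
  linarith

/-- The Riemannian gradient under the generalized canonical metric:
`grad = ρ X J skew(J Xᵀ G) + A⁻¹ X⊥ Γ₃ X⊥ᵀ A⁻¹ G` is a tangent vector at `X` and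
satisfies `g_{ρ,X⊥}(grad, Z) = tr(Gᵀ Z)` for every tangent vector `Z`, where
`g_{ρ,X⊥}(Z₁,Z₂) = tr(Z₁ᵀ M_X Z₂)` with `M_X = (ρ X Xᵀ + A⁻¹ X⊥ Γ₃ X⊥ᵀ A⁻¹)⁻¹`. -/
theorem stmt_11 {n k : ℕ} (A : Matrix (Fin n) (Fin n) ℝ) (J : Matrix (Fin k) (Fin k) ℝ)
    (hA : Aᵀ = A) (hAinv : IsUnit A.det) (hJ : Jᵀ = J) (hJ2 : J * J = 1)
    (X : Matrix (Fin n) (Fin k) ℝ) (hX : Xᵀ * A * X = J)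
    (Xp : Matrix (Fin n) (Fin (n - k)) ℝ) (hXp : Xp.rank = n - k)
    (hperp : Xᵀ * Xp = 0)
    (ρ : ℝ) (hρ : 0 < ρ) (Γ₃ : Matrix (Fin (n - k)) (Fin (n - k)) ℝ) (hΓ₃ : Γ₃.PosDef)
    (G : Matrix (Fin n) (Fin k) ℝ)
    (grad : Matrix (Fin n) (Fin k) ℝ)
    (hgrad : grad = ρ • (X * J * ((1 / 2 : ℝ) • (J * Xᵀ * G - (J * Xᵀ * G)ᵀ))) +
        A⁻¹ * Xp * Γ₃ * Xpᵀ * A⁻¹ * G) :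
    gradᵀ * A * X + Xᵀ * A * grad = 0 ∧
    ∀ Z : Matrix (Fin n) (Fin k) ℝ, Zᵀ * A * X + Xᵀ * A * Z = 0 →
      Matrix.trace (gradᵀ * (ρ • (X * Xᵀ) + A⁻¹ * Xp * Γ₃ * Xpᵀ * A⁻¹)⁻¹ * Z) =
        Matrix.trace (Gᵀ * Z) := by
  have hAi : (A⁻¹)ᵀ = A⁻¹ := by rw [Matrix.transpose_nonsing_inv, hA]
  have hΓs : Γ₃ᵀ = Γ₃ := by
    have h := hΓ₃.1
    rw [Matrix.isHermitian_iff_isSymm] at h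
    exact h
  have hpx : Xpᵀ * X = 0 := by
    have := congrArg Matrix.transpose hperp
    simpa [Matrix.transpose_mul] using this
  -- rewrite helpers (right-associated forms)
  have hAAl : ∀ (M : Matrix (Fin n) (Fin k) ℝ), A⁻¹ * (A * M) = M := fun M => by
    rw [← Matrix.mul_assoc, Matrix.nonsing_inv_mul A hAinv, Matrix.one_mul]
  have hAAr : ∀ (M : Matrix (Fin n) (Fin k) ℝ), A * (A⁻¹ * M) = M := fun M => by
    rw [← Matrix.mul_assoc, Matrix.mul_nonsing_inv A hAinv, Matrix.one_mul]
  have hJJ : ∀ (M : Matrix (Fin k) (Fin k) ℝ), J * (J * M) = M := fun M => by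
    rw [← Matrix.mul_assoc, hJ2, Matrix.one_mul]
  have hXAX : Xᵀ * (A * X) = J := by rw [← Matrix.mul_assoc, hX]
  have hXAXl : ∀ (M : Matrix (Fin k) (Fin k) ℝ), Xᵀ * (A * (X * M)) = J * M := fun M => by
    rw [← Matrix.mul_assoc A X M, ← Matrix.mul_assoc Xᵀ (A*X) M, ← Matrix.mul_assoc, hX]
  have hpXl : ∀ (M : Matrix (Fin k) (Fin k) ℝ), Xpᵀ * (X * M) = 0 := fun M => by
    rw [← Matrix.mul_assoc, hpx, Matrix.zero_mul]
  have hXXpl : ∀ (M : Matrix (Fin (n-k)) (Fin k) ℝ), Xᵀ * (Xp * M) = 0 := fun M => by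
    rw [← Matrix.mul_assoc, hperp, Matrix.zero_mul]
  set S : Matrix (Fin k) (Fin k) ℝ := (1 / 2 : ℝ) • (J * Xᵀ * G + Gᵀ * X * J) with hS
  have hSs : Sᵀ = S := by
    rw [hS]
    simp only [Matrix.transpose_smul, Matrix.transpose_add, Matrix.transpose_mul,
      Matrix.transpose_transpose, hJ, Matrix.mul_assoc]
    rw [add_comm]
  set T := A⁻¹ * Xp * Γ₃ * Xpᵀ * A⁻¹ with hT
  set N := ρ • (X * Xᵀ) + T with hNdef
  have hNu : IsUnit N := aux_isUnit hA hAinv hJ2 hX hXp hperp hρ hΓ₃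
  have hNs : Nᵀ = N := by
    rw [hNdef, hT]
    simp only [Matrix.transpose_add, Matrix.transpose_smul, Matrix.transpose_mul,
      Matrix.transpose_transpose, hAi, hΓs, Matrix.mul_assoc]
  have hgradN : grad = N * (G - A * X * S) := by
    rw [hgrad, hNdef, hT, hS]
    simp only [Matrix.mul_sub, Matrix.sub_mul, Matrix.add_mul, Matrix.mul_add,
      Matrix.smul_mul, Matrix.mul_smul, Matrix.transpose_mul, Matrix.transpose_transpose,
      hJ, smul_smul, smul_sub, smul_add, Matrix.mul_assoc, hAAl, hAAr, hJJ, hXAX, hXAXl,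
      hpXl, hXXpl, hpx, hperp, Matrix.mul_zero, Matrix.zero_mul, smul_zero]
    module
  refine ⟨?_, ?_⟩
  · rw [hgradN]
    simp only [hNdef, hT, hS, Matrix.transpose_mul, Matrix.transpose_add, Matrix.transpose_smul,
      Matrix.transpose_sub, Matrix.transpose_transpose, hAi, hΓs, hJ, hA,
      Matrix.mul_sub, Matrix.sub_mul, Matrix.add_mul, Matrix.mul_add,
      Matrix.smul_mul, Matrix.mul_smul, smul_smul, smul_sub, smul_add, Matrix.mul_assoc,
      hAAl, hAAr, hJJ, hXAX, hXAXl, hpXl, hXXpl, hpx, hperp, hJ2,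
      Matrix.mul_zero, Matrix.zero_mul, Matrix.mul_one, Matrix.one_mul, smul_zero,
      Matrix.transpose_zero]
    module
  · intro Z hZ
    rw [Matrix.mul_assoc, Matrix.mul_assoc] at hZ
    have hNdetu : IsUnit N.det := (Matrix.isUnit_iff_isUnit_det N).mp hNu
    have h1 : gradᵀ * N⁻¹ * Z = (G - A * X * S)ᵀ * Z := by
      rw [hgradN, Matrix.transpose_mul, Matrix.mul_assoc (G - A * X * S)ᵀ Nᵀ N⁻¹, hNs,
        Matrix.mul_nonsing_inv N hNdetu, Matrix.mul_one]
    rw [h1]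
    have hK : (Xᵀ * (A * Z))ᵀ = -(Xᵀ * (A * Z)) := by
      calc (Xᵀ * (A * Z))ᵀ = Zᵀ * (A * X) := by
            simp [Matrix.transpose_mul, hA, Matrix.mul_assoc]
        _ = -(Xᵀ * (A * Z)) := eq_neg_of_add_eq_zero_left hZ
    have h3 : (G - A * X * S)ᵀ * Z = Gᵀ * Z - S * (Xᵀ * (A * Z)) := by
      simp only [Matrix.transpose_sub, Matrix.sub_mul, Matrix.transpose_mul,
        Matrix.transpose_transpose, hSs, hA, Matrix.mul_assoc]
    rw [h3, Matrix.trace_sub, trace_symm_skew S (Xᵀ * (A * Z)) hSs hK, sub_zero]
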